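/- (Lemma on lowest weight vectors in tensor products) Let N ≥ 1 and let B_1, B_2 be sets, each equipped with a function ⟨h_0, ·⟩ : B_j → ℤ and partial operators ẽ_i, f̃_i : B_j → B_j ∪ {0} for 0 ≤ i ≤ N, such that: (a) for every element x and every 1 ≤ i ≤ N, the quantities ε_i(x) = max{n ≥ 0 : ẽ_i^n x ≠ 0} and φ_i(x) = max{n ≥ 0 : f̃_i^n x ≠ 0} are finite; (b) ⟨h_0, x⟩ ≥ 0 for every x; (c) ẽ_0 x = f̃_0 x = 0 whenever ⟨h_0, x⟩ = 0. Define operators on B_1 × B_2 by the tensor rules: for 1 ≤ i ≤ N, f̃_i(x ⊗ y) = x ⊗ f̃_i y if ε_i(x) < φ_i(y) and = f̃_i x ⊗ y if ε_i(x) ≥ φ_i(y); f̃_0(x ⊗ y) = x ⊗ f̃_0 y if ⟨h_0, x⟩ = 0 and = f̃_0 x ⊗ y if ⟨h_0, x⟩ > 0 (result 0 when the operator applied to the chosen factor is 0). Then every pair (x, y) ∈ B_1 × B_2 with f̃_i(x ⊗ y) = 0 for all 0 ≤ i ≤ N satisfies f̃_i x = 0 for all 0 ≤ i ≤ N; that is,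 every lowest weight element of B_1 ⊗ B_2 is of the form u_1 ⊗ v with u_1 a lowest weight element of B_1. -/

import Mathlib

namespace CrystalPaper

/-- `n`-fold iteration of a partial operator (`none` codes `0`). -/
def iterOp {σ : Type*} (f : σ → Option σ) : ℕ → σ → Option σ
  | 0, x => some x
  | n + 1, x => (f x).bind (iterOp f n)

/-- `max {n ≥ 0 : f^n x ≠ 0}`, as a supremum in `ℕ`.  Used for
`ε_i(x) = max{n : ẽ_i^n x ≠ 0}` and `φ_i(y) = max{n : f̃_i^n y ≠ 0}`. -/
noncomputable def opMax {σ : Type*} (f : σ → Option σ) (x : σ) : ℕ :=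
  sSup {n | iterOp f n x ≠ none}

/-- The tensor-product lowering operator `f̃_i` on `B₁ × B₂`:
for `i = 0` the super rule (`f̃_0(x ⊗ y) = x ⊗ f̃_0 y` if `⟨h_0,x⟩ = 0`, and
`f̃_0 x ⊗ y` if `⟨h_0,x⟩ > 0`); for `i ≥ 1` the tensor rule
(`f̃_i(x ⊗ y) = x ⊗ f̃_i y` if `ε_i(x) < φ_i(y)`, and `f̃_i x ⊗ y` if
`ε_i(x) ≥ φ_i(y)`); the result is `none` when the operator applied to the chosen
factor is `none`. -/
noncomputable def tfGen {B₁ B₂ : Type*} (h₁ : B₁ → ℤ)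
    (e₁ f₁ : ℕ → B₁ → Option B₁) (f₂ : ℕ → B₂ → Option B₂)
    (i : ℕ) (x : B₁) (y : B₂) : Option (B₁ × B₂) :=
  if i = 0 then
    if h₁ x = 0 then (f₂ 0 y).map fun y' => (x, y')
    else (f₁ 0 x).map fun x' => (x', y)
  else
    if opMax (e₁ i) x < opMax (f₂ i) y then (f₂ i y).map fun y' => (x, y')
    else (f₁ i x).map fun x' => (x', y)

lemma opMax_eq_zero {σ : Type*} (f : σ → Option σ) (y : σ) (h : f y = none) :
    opMax f y = 0 := by
  have hset : {n | iterOp f n y ≠ none} = {0} := by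
    ext n
    cases n with
    | zero => simp [iterOp]
    | succ m => simp [iterOp, h]
  simp [opMax, hset]

/-- lemma on lowest weight vectors in tensor products.  Let `N ≥ 1`
and let `B₁`, `B₂` carry functions `⟨h_0, ·⟩` and partial operators `ẽ_i, f̃_i`,
`0 ≤ i ≤ N`, such that (a) all strings for `1 ≤ i ≤ N` are finite, (b) `⟨h_0, ·⟩ ≥ 0`
everywhere, and (c) `ẽ_0` and `f̃_0` kill every element with `⟨h_0, ·⟩ = 0`.  Then
every pair `(x, y)` killed by all tensor-product operators `f̃_i`, `0 ≤ i ≤ N`,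
satisfies `f̃_i x = 0` for all `0 ≤ i ≤ N`: every lowest weight element of
`B₁ ⊗ B₂` is of the form `u₁ ⊗ v` with `u₁` a lowest weight element of `B₁`. -/
theorem lowest_weight_tensor_first_factor (N : ℕ) (hN : 1 ≤ N)
    {B₁ B₂ : Type*} (h₁ : B₁ → ℤ) (h₂ : B₂ → ℤ)
    (e₁ f₁ : ℕ → B₁ → Option B₁) (e₂ f₂ : ℕ → B₂ → Option B₂)
    (ha₁ : ∀ i, 1 ≤ i → i ≤ N → ∀ x : B₁,
      BddAbove {n | iterOp (e₁ i) n x ≠ none} ∧ BddAbove {n | iterOp (f₁ i) n x ≠ none})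
    (ha₂ : ∀ i, 1 ≤ i → i ≤ N → ∀ y : B₂,
      BddAbove {n | iterOp (e₂ i) n y ≠ none} ∧ BddAbove {n | iterOp (f₂ i) n y ≠ none})
    (hb₁ : ∀ x, 0 ≤ h₁ x) (hb₂ : ∀ y, 0 ≤ h₂ y)
    (hc₁ : ∀ x, h₁ x = 0 → e₁ 0 x = none ∧ f₁ 0 x = none)
    (hc₂ : ∀ y, h₂ y = 0 → e₂ 0 y = none ∧ f₂ 0 y = none)
    (x : B₁) (y : B₂)
    (hlw : ∀ i, i ≤ N → tfGen h₁ e₁ f₁ f₂ i x y = none) :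
    ∀ i, i ≤ N → f₁ i x = none := by
  intro i hi
  have h := hlw i hi
  unfold tfGen at h
  by_cases h0 : i = 0
  · subst h0
    by_cases hx : h₁ x = 0
    · exact (hc₁ x hx).2
    · simp only [if_neg hx, Option.map_eq_none_iff, if_true] at h
      simpa using h
  · simp only [if_neg h0] at h
    by_cases hlt : opMax (e₁ i) x < opMax (f₂ i) y
    · rw [if_pos hlt, Option.map_eq_none_iff] at h
      have := opMax_eq_zero (f₂ i) y h
      omega
    · rw [if_neg hlt, Option.map_eq_none_iff] at h
      exact h

end CrystalPaper
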